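/- Let K be a convex body in ℝ^n and let q_1, …, q_m ∈ ℝ^n with 2 ≤ m ≤ n + 1 be points such that the set {q_1, …, q_m} is not contained in any translate t + r • K with 0 < r < 1. Then the length of the closed polygonal line through these points, L = Σ_{i=1}^{m} ‖q_{i+1} − q_i‖ (indices taken cyclically, q_{m+1} = q_1), measured in the norm given by the gauge of K + (−K), satisfies L ≥ 1 + 1/n. -/

import Mathlib

open scoped Pointwise

/-- Membership in a dilate from a strict gauge bound. -/
lemma mem_smul_of_gauge_lt' {E : Type*} [AddCommGroup E] [Module ℝ E] [TopologicalSpace E]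
    {s : Set E} (hs : Convex ℝ s) (h0 : (0 : E) ∈ s) (habs : Absorbent ℝ s)
    {x : E} {c : ℝ} (h : gauge s x < c) : x ∈ c • s := by
  have hc : 0 < c := (gauge_nonneg x).trans_lt h
  have h1 : gauge s (c⁻¹ • x) < 1 := by
    rw [gauge_smul_of_nonneg (inv_nonneg.mpr hc.le), smul_eq_mul]
    rw [inv_mul_lt_iff₀ hc, mul_one]
    exact h
  have hx : c⁻¹ • x ∈ s := gauge_lt_one_subset_self hs h0 habs h1
  have := Set.smul_mem_smul_set (a := c) hx
  rwa [smul_inv_smul₀ hc.ne'] at this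

/-- A sum of elements of dilates of a convex set lies in the dilate by the total. -/
lemma sum_mem_smul_of_convex {ι E : Type*} [AddCommGroup E] [Module ℝ E] {K : Set E}
    (hK : Convex ℝ K) (hne : K.Nonempty) (t : Finset ι) (c : ι → ℝ) (f : ι → E)
    (hc : ∀ i ∈ t, 0 ≤ c i) (hf : ∀ i ∈ t, f i ∈ c i • K) :
    (∑ i ∈ t, f i) ∈ (∑ i ∈ t, c i) • K := by
  classical
  induction t using Finset.induction with
  | empty => simp [Set.zero_smul_set hne]
  | insert x tt hx ih =>
    rw [Finset.sum_insert hx, Finset.sum_insert hx,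
      hK.add_smul (hc _ (Finset.mem_insert_self _ _))
        (Finset.sum_nonneg fun i hi => hc i (Finset.mem_insert_of_mem hi))]
    exact Set.add_mem_add (hf _ (Finset.mem_insert_self _ _))
      (ih (fun i hi => hc i (Finset.mem_insert_of_mem hi))
        (fun i hi => hf i (Finset.mem_insert_of_mem hi)))

/-- If the points `q 1, …, q m` (with `2 ≤ m ≤ n + 1`) cannot be covered by
any translate `t + r • K` with `0 < r < 1`, then the closed polygonal line through them has
length at least `1 + 1/n` in the gauge norm of `K + (−K)`. -/
theorem closed_polygon_length_ge_one_add_inv_n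
    {n : ℕ} (K : Set (Fin n → ℝ)) (hK : IsCompact K) (hKconv : Convex ℝ K)
    (hKint : (interior K).Nonempty)
    (m : ℕ) (hm : 2 ≤ m) (hmn : m ≤ n + 1) (q : ℕ → (Fin n → ℝ))
    (hnc : ∀ (t : Fin n → ℝ) (r : ℝ), 0 < r → r < 1 → ¬ (q '' Set.Icc 1 m ⊆ {t} + r • K)) :
    1 + 1 / (n : ℝ) ≤
      ∑ i ∈ Finset.Icc 1 m, gauge (K + -K) (q (if i = m then 1 else i + 1) - q i) := by
  classical
  by_contra hlt
  push_neg at hlt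
  set v : ℕ → (Fin n → ℝ) := fun i => q (if i = m then 1 else i + 1) - q i with hv
  set B : Set (Fin n → ℝ) := K + -K with hB
  obtain ⟨z, hz⟩ := hKint
  have hzK : z ∈ K := interior_subset hz
  have hKne : K.Nonempty := ⟨z, hzK⟩
  have hBconv : Convex ℝ B := hKconv.add hKconv.neg
  have h0B : (0 : Fin n → ℝ) ∈ interior B := by
    have hopen : IsOpen (interior K + -K) := (isOpen_interior).add_right
    have hsub : interior K + -K ⊆ B := Set.add_subset_add_right interior_subset
    have hmem : (0 : Fin n → ℝ) ∈ interior K + -K := by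
      have hnegz : -z ∈ -K := Set.neg_mem_neg.mpr hzK
      have := Set.add_mem_add hz hnegz
      simpa using this
    exact interior_maximal hsub hopen hmem
  have h0B' : (0 : Fin n → ℝ) ∈ B := interior_subset h0B
  have habs : Absorbent ℝ B := absorbent_nhds_zero (mem_interior_iff_mem_nhds.mp h0B)
  -- basic numerology
  have hn : 1 ≤ n := by omega
  have hmR : (0 : ℝ) < m := by positivity
  have hm1R : (1 : ℝ) ≤ (m : ℝ) - 1 := by
    have : (2 : ℝ) ≤ m := by exact_mod_cast hm
    linarith
  have hm1pos : (0 : ℝ) < (m : ℝ) - 1 := by linarith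
  set L : ℝ := ∑ i ∈ Finset.Icc 1 m, gauge B (v i) with hL
  have hLlt : L < (m : ℝ) / ((m : ℝ) - 1) := by
    have h1 : L < 1 + 1 / (n : ℝ) := hlt
    have h2 : 1 + 1 / (n : ℝ) ≤ (m : ℝ) / ((m : ℝ) - 1) := by
      have hmn' : (m : ℝ) - 1 ≤ (n : ℝ) := by
        have : (m : ℝ) ≤ (n : ℝ) + 1 := by exact_mod_cast hmn
        linarith
      have hnpos : (0 : ℝ) < n := by exact_mod_cast hn
      have h4 : 1 / (n : ℝ) ≤ 1 / ((m : ℝ) - 1) :=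
        one_div_le_one_div_of_le hm1pos hmn'
      have h3 : (m : ℝ) / ((m : ℝ) - 1) = 1 + 1 / ((m : ℝ) - 1) := by
        field_simp; ring
      rw [h3]; linarith
    linarith
  set ε : ℝ := ((m : ℝ) / ((m : ℝ) - 1) - L) / (2 * m) with hε
  have hεpos : 0 < ε := by
    apply div_pos (by linarith) (by linarith)
  set lam : ℕ → ℝ := fun i => gauge B (v i) + ε with hlam
  have hlampos : ∀ i, 0 < lam i := fun i => add_pos_of_nonneg_of_pos (gauge_nonneg _) hεpos
  set L' : ℝ := ∑ i ∈ Finset.Icc 1 m, lam i with hL'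
  have hIccCard : (Finset.Icc 1 m).card = m := by
    rw [Nat.card_Icc]; omega
  have hL'eq : L' = L + m * ε := by
    rw [hL', hlam, Finset.sum_add_distrib, Finset.sum_const, hIccCard, ← hL]
    simp [nsmul_eq_mul]
  have hL'pos : 0 < L' := by
    rw [hL'eq]
    have : 0 ≤ L := Finset.sum_nonneg fun i _ => gauge_nonneg _
    have : 0 < (m : ℝ) * ε := by positivity
    linarith
  have hL'lt : L' < (m : ℝ) / ((m : ℝ) - 1) := by
    rw [hL'eq, hε]
    have hm0 : (m : ℝ) ≠ 0 := ne_of_gt hmR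
    have heq : (m : ℝ) * (((m : ℝ) / ((m : ℝ) - 1) - L) / (2 * m))
        = ((m : ℝ) / ((m : ℝ) - 1) - L) / 2 := by
      field_simp
    rw [heq]; linarith
  -- decomposition of edges
  have hmemv : ∀ i, v i ∈ lam i • B :=
    fun i => mem_smul_of_gauge_lt' hBconv h0B' habs (lt_add_of_pos_right _ hεpos)
  have hdecomp : ∀ i : ℕ, ∃ x y : Fin n → ℝ, x ∈ lam i • K ∧ y ∈ lam i • K ∧ v i = x - y := by
    intro i
    obtain ⟨w, hw, hwv⟩ := hmemv i
    obtain ⟨x, hx, y', hy', hxy⟩ := hw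
    refine ⟨lam i • x, lam i • (-y'), Set.smul_mem_smul_set hx,
      Set.smul_mem_smul_set (Set.mem_neg.mp hy'), ?_⟩
    rw [← hwv, ← hxy]
    show lam i • (x + y') = lam i • x - lam i • (-y')
    rw [smul_add, smul_neg, sub_neg_eq_add]
  choose a b ha hb hab using hdecomp
  set s : Fin n → ℝ := ∑ i ∈ Finset.Icc 1 m, b i with hs
  -- telescoping
  have htel : ∀ k j : ℕ, k ≤ j → j ≤ m → ∑ i ∈ Finset.Ico k j, v i = q j - q k := by
    intro k j hkj hjm
    have hcongr : ∑ i ∈ Finset.Ico k j, v i = ∑ i ∈ Finset.Ico k j, (q (i + 1) - q i) := by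
      apply Finset.sum_congr rfl
      intro i hi
      have him : i ≠ m := by
        have := (Finset.mem_Ico.mp hi).2; omega
      simp [hv, him]
    rw [hcongr, Finset.sum_Ico_eq_sub _ hkj, Finset.sum_range_sub, Finset.sum_range_sub]
    abel
  have hsumv : ∑ i ∈ Finset.Icc 1 m, v i = 0 := by
    have h1 : Finset.Icc 1 m = Finset.Ico 1 (m + 1) := by rw [Finset.Ico_add_one_right_eq_Icc]
    rw [h1, Finset.sum_Ico_succ_top (by omega)]
    rw [htel 1 m (by omega) le_rfl]
    have : v m = q 1 - q m := by simp [hv]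
    rw [this]; abel
  have hsumab : ∑ i ∈ Finset.Icc 1 m, (a i - b i) = 0 := by
    rw [← hsumv]
    exact Finset.sum_congr rfl fun i _ => (hab i).symm
  -- the key membership: for k ≠ j in [1,m], q j - q k + s ∈ L' • K
  have hP : ∀ j ∈ Finset.Icc 1 m, ∀ k ∈ Finset.Icc 1 m, k ≠ j →
      q j - q k + s ∈ L' • K := by
    intro j hj k hk hkj
    rw [Finset.mem_Icc] at hj hk
    obtain ⟨A, hAsub, hAsum⟩ : ∃ A : Finset ℕ, A ⊆ Finset.Icc 1 m ∧
        ∑ i ∈ A, (a i - b i) = q j - q k := by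
      rcases Ne.lt_or_gt hkj with h | h
      · refine ⟨Finset.Ico k j, ?_, ?_⟩
        · intro i hi
          rw [Finset.mem_Ico] at hi
          rw [Finset.mem_Icc]
          omega
        · rw [show (∑ i ∈ Finset.Ico k j, (a i - b i)) = ∑ i ∈ Finset.Ico k j, v i from
            Finset.sum_congr rfl fun i _ => (hab i).symm]
          exact htel k j h.le hj.2
      · refine ⟨Finset.Icc 1 m \ Finset.Ico j k, Finset.sdiff_subset, ?_⟩
        have hsub : Finset.Ico j k ⊆ Finset.Icc 1 m := by
          intro i hi
          rw [Finset.mem_Ico] at hi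
          rw [Finset.mem_Icc]
          omega
        rw [Finset.sum_sdiff_eq_sub hsub, hsumab,
          show (∑ i ∈ Finset.Ico j k, (a i - b i)) = ∑ i ∈ Finset.Ico j k, v i from
            Finset.sum_congr rfl fun i _ => (hab i).symm,
          htel j k h.le hk.2]
        abel
    have hkey : q j - q k + s = ∑ i ∈ Finset.Icc 1 m, (if i ∈ A then a i else b i) := by
      have expand : ∀ i ∈ Finset.Icc 1 m,
          (if i ∈ A then a i else b i) = (if i ∈ A then a i - b i else 0) + b i := by
        intro i _
        by_cases h : i ∈ A <;> simp [h]
      rw [Finset.sum_congr rfl expand, Finset.sum_add_distrib, ← Finset.sum_filter,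
        Finset.filter_mem_eq_inter, Finset.inter_eq_right.mpr hAsub, hAsum, ← hs]
    rw [hkey, hL']
    apply sum_mem_smul_of_convex hKconv hKne _ lam
    · exact fun i _ => (hlampos i).le
    · intro i _
      by_cases h : i ∈ A <;> simp only [h, if_true, if_false] <;> [exact ha i; exact hb i]
  -- the covering translate and radius
  set t : Fin n → ℝ := ((m : ℝ))⁻¹ • (∑ k ∈ Finset.Icc 1 m, q k) - (((m : ℝ) - 1) / m) • s with ht
  set r : ℝ := (((m : ℝ) - 1) / m) * L' with hr
  have hrpos : 0 < r := by
    apply mul_pos (div_pos hm1pos hmR) hL'pos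
  have hrlt : r < 1 := by
    rw [hr]
    calc (((m : ℝ) - 1) / m) * L' < (((m : ℝ) - 1) / m) * ((m : ℝ) / ((m : ℝ) - 1)) := by
          apply mul_lt_mul_of_pos_left hL'lt (div_pos hm1pos hmR)
      _ = 1 := by field_simp
  -- each point is covered
  have hcov : ∀ j ∈ Finset.Icc 1 m, q j - t ∈ r • K := by
    intro j hj
    have hjIcc := hj
    rw [Finset.mem_Icc] at hj
    have hsplit : q j - t =
        ((m : ℝ))⁻¹ • ∑ k ∈ (Finset.Icc 1 m).erase j, (q j - q k + s) := by
      rw [Finset.sum_add_distrib, Finset.sum_sub_distrib, Finset.sum_const, Finset.sum_const,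
        Finset.card_erase_of_mem hjIcc, hIccCard,
        Finset.sum_erase_eq_sub hjIcc]
      have hcast : ((m - 1 : ℕ) : ℝ) = (m : ℝ) - 1 := by
        have : (1:ℕ) ≤ m := by omega
        push_cast [this]; ring
      rw [← Nat.cast_smul_eq_nsmul ℝ (m - 1), hcast, ht]
      have hm0 : (m : ℝ) ≠ 0 := ne_of_gt hmR
      match_scalars <;> field_simp
      · ring
      · exact hcast.symm
    have hsum_mem : (∑ k ∈ (Finset.Icc 1 m).erase j, (q j - q k + s)) ∈
        (∑ k ∈ (Finset.Icc 1 m).erase j, L') • K := by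
      apply sum_mem_smul_of_convex hKconv hKne _ (fun _ => L')
      · exact fun _ _ => hL'pos.le
      · intro k hk
        exact hP j hjIcc k (Finset.mem_of_mem_erase hk) (Finset.ne_of_mem_erase hk)
    rw [Finset.sum_const, Finset.card_erase_of_mem hjIcc, hIccCard] at hsum_mem
    obtain ⟨x, hx, hxe⟩ := hsum_mem
    rw [hsplit, ← hxe, ← smul_assoc]
    have hcast : ((m - 1 : ℕ) : ℝ) = (m : ℝ) - 1 := by
      have : (1:ℕ) ≤ m := by omega
      push_cast [show (1:ℕ) ≤ m by omega]; ring
    have : ((m : ℝ))⁻¹ • ((m - 1 : ℕ) • L') = r := by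
      rw [← Nat.cast_smul_eq_nsmul ℝ (m - 1), hcast, hr]
      simp only [smul_eq_mul]
      field_simp
    rw [this]
    exact Set.smul_mem_smul_set hx
  -- contradiction with hnc
  apply hnc t r hrpos hrlt
  rintro x ⟨j, hj, rfl⟩
  rw [Set.mem_Icc] at hj
  have := hcov j (Finset.mem_Icc.mpr hj)
  have h2 := Set.add_mem_add (Set.mem_singleton t) this
  simpa using h2
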